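/- Let f_c > 0 and define sinc_{f_c} : ℝ → ℝ by sinc_{f_c}(x) = sin(π f_c x)/(π x) for x ≠ 0 and sinc_{f_c}(0) = f_c. Then for all a, b ∈ ℝ, ∫_ℝ sinc_{f_c}(x − a) · sinc_{f_c}(x − b) dx = sinc_{f_c}(a − b). In particular, ∫_ℝ sinc_{f_c}(x)² dx = f_c. -/

import Mathlib

open MeasureTheory

/-- The band-limited sinc kernel with cutoff frequency `fc`:
`sinc_{fc}(x) = sin(π fc x)/(π x)` for `x ≠ 0` and `sinc_{fc}(0) = fc`. -/
noncomputable def sincF (fc : ℝ) (x : ℝ) : ℝ :=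
  if x = 0 then fc else Real.sin (Real.pi * fc * x) / (Real.pi * x)

namespace SincAux

open Complex Real Filter Set
open scoped FourierTransform Convolution

variable {fc : ℝ}

lemma sincF_even (fc x : ℝ) : sincF fc (-x) = sincF fc x := by
  unfold sincF
  rcases eq_or_ne x 0 with h | h
  · simp [h]
  · rw [if_neg (neg_ne_zero.mpr h), if_neg h, mul_neg, Real.sin_neg, mul_neg, neg_div_neg_eq]

lemma measurable_sincF (fc : ℝ) : Measurable (sincF fc) := by
  unfold sincF
  exact Measurable.ite measurableSet_eq measurable_const
    ((Real.measurable_sin.comp (measurable_const.mul measurable_id)).div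
      (measurable_const.mul measurable_id))

lemma abs_sincF_le (hfc : 0 < fc) (x : ℝ) : |sincF fc x| ≤ fc := by
  unfold sincF
  rcases eq_or_ne x 0 with h | h
  · simp [h, abs_of_pos hfc]
  · rw [if_neg h, abs_div]
    rw [div_le_iff₀ (by positivity : (0:ℝ) < |π * x|)]
    calc |Real.sin (π * fc * x)| ≤ |π * fc * x| := Real.abs_sin_le_abs
      _ = fc * |π * x| := by
          rw [show π * fc * x = fc * (π * x) by ring, abs_mul, abs_of_pos hfc]

lemma abs_sincF_le' (x : ℝ) (hx : x ≠ 0) : |sincF fc x| ≤ (π * |x|)⁻¹ := by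
  unfold sincF
  rw [if_neg hx, abs_div, show |π * x| = π * |x| by rw [abs_mul, abs_of_pos Real.pi_pos]]
  rw [div_eq_mul_inv]
  have h1 : |Real.sin (π * fc * x)| ≤ 1 := Real.abs_sin_le_one _
  have h2 : (0:ℝ) ≤ (π * |x|)⁻¹ := by positivity
  nlinarith [abs_nonneg (Real.sin (π * fc * x))]

lemma integral_char (hfc : 0 < fc) (c : ℝ) :
    ∫ t in (-(fc/2))..(fc/2), Complex.exp ((2 * π * c * t : ℝ) * Complex.I)
      = (sincF fc c : ℂ) := by
  rcases eq_or_ne c 0 with h | h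
  · simp only [h, mul_zero, zero_mul, Complex.ofReal_zero, Complex.exp_zero]
    rw [intervalIntegral.integral_const, sincF, if_pos rfl, sub_neg_eq_add,
      Complex.real_smul, mul_one]
    push_cast
    ring
  · have hz : ((2 * π * c : ℝ) : ℂ) * Complex.I ≠ 0 := by
      simp [Complex.I_ne_zero, Real.pi_ne_zero, h]
    have heq : ∀ t : ℝ, Complex.exp ((2 * π * c * t : ℝ) * Complex.I)
        = Complex.exp (((2 * π * c : ℝ) : ℂ) * Complex.I * t) := by
      intro t; congr 1; push_cast; ring
    simp_rw [heq]
    rw [integral_exp_mul_complex hz]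
    have e1 : ((2 * π * c : ℝ) : ℂ) * Complex.I * ((fc/2 : ℝ) : ℂ)
        = ((π * c * fc : ℝ) : ℂ) * Complex.I := by push_cast; ring
    have e2 : ((2 * π * c : ℝ) : ℂ) * Complex.I * ((-(fc/2) : ℝ) : ℂ)
        = ((-(π * c * fc) : ℝ) : ℂ) * Complex.I := by push_cast; ring
    rw [e1, e2, Complex.exp_mul_I, Complex.exp_mul_I]
    rw [sincF, if_neg h]
    rw [div_eq_iff hz]
    have hss : Real.sin (π * fc * c) = Real.sin (π * c * fc) := by ring_nf
    rw [hss]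
    push_cast
    rw [Complex.cos_neg, Complex.sin_neg]
    have hpc : (π : ℂ) ≠ 0 := Complex.ofReal_ne_zero.mpr Real.pi_ne_zero
    have hcz : (c : ℂ) ≠ 0 := Complex.ofReal_ne_zero.mpr h
    field_simp
    ring

noncomputable def uFn (fc c : ℝ) : ℝ → ℂ :=
  Set.indicator (Set.Icc (-(fc/2)) (fc/2))
    (fun t => Complex.exp ((2 * π * c * t : ℝ) * Complex.I))

lemma measurable_uFn (fc c : ℝ) : Measurable (uFn fc c) := by
  apply Measurable.indicator _ measurableSet_Icc
  fun_prop

lemma uFn_integrable (fc c : ℝ) : Integrable (uFn fc c) := by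
  refine IntegrableOn.integrable_indicator ?_ measurableSet_Icc
  exact Continuous.integrableOn_Icc (by fun_prop)

lemma norm_uFn_le_one (fc c t : ℝ) : ‖uFn fc c t‖ ≤ 1 := by
  unfold uFn
  by_cases h : t ∈ Set.Icc (-(fc/2)) (fc/2)
  · rw [Set.indicator_of_mem h]
    rw [Complex.norm_exp_ofReal_mul_I]
  · rw [Set.indicator_of_notMem h]; simp

lemma norm_uFn_le (fc c t : ℝ) :
    ‖uFn fc c t‖ ≤ Set.indicator (Set.Icc (-(fc/2)) (fc/2)) (fun _ => (1:ℝ)) t := by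
  unfold uFn
  by_cases h : t ∈ Set.Icc (-(fc/2)) (fc/2)
  · rw [Set.indicator_of_mem h, Set.indicator_of_mem h]
    rw [Complex.norm_exp_ofReal_mul_I]
  · rw [Set.indicator_of_notMem h, Set.indicator_of_notMem h]; simp

lemma integral_uFn (hfc : 0 < fc) (c : ℝ) : ∫ t, uFn fc c t = (sincF fc c : ℂ) := by
  rw [show (∫ t, uFn fc c t) = ∫ t in Set.Icc (-(fc/2)) (fc/2),
      Complex.exp ((2 * π * c * t : ℝ) * Complex.I) from
    MeasureTheory.integral_indicator measurableSet_Icc]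
  rw [MeasureTheory.integral_Icc_eq_integral_Ioc,
    ← intervalIntegral.integral_of_le (by linarith : -(fc/2) ≤ fc/2)]
  exact integral_char hfc c

lemma char_mul_uFn (fc c ξ t : ℝ) :
    Complex.exp ((-2 * π * t * ξ : ℝ) * Complex.I) * uFn fc c t = uFn fc (c - ξ) t := by
  unfold uFn
  by_cases h : t ∈ Set.Icc (-(fc/2)) (fc/2)
  · rw [Set.indicator_of_mem h, Set.indicator_of_mem h, ← Complex.exp_add]
    congr 1; push_cast; ring
  · rw [Set.indicator_of_notMem h, Set.indicator_of_notMem h, mul_zero]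

lemma fourier_uFn (hfc : 0 < fc) (c ξ : ℝ) :
    𝓕 (uFn fc c) ξ = (sincF fc (ξ - c) : ℂ) := by
  rw [Real.fourier_real_eq_integral_exp_smul]
  simp_rw [smul_eq_mul, char_mul_uFn]
  rw [integral_uFn hfc, show c - ξ = -(ξ - c) by ring, sincF_even]

lemma uFn_continuousAt (c y : ℝ) (h1 : y ≠ -(fc/2)) (h2 : y ≠ fc/2) :
    ContinuousAt (uFn fc c) y := by
  by_cases hy : y ∈ Set.Icc (-(fc/2)) (fc/2)
  · have hy' : y ∈ Set.Ioo (-(fc/2)) (fc/2) :=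
      ⟨lt_of_le_of_ne hy.1 (Ne.symm h1), lt_of_le_of_ne hy.2 h2⟩
    have hev : uFn fc c =ᶠ[nhds y] fun t => Complex.exp ((2 * π * c * t : ℝ) * Complex.I) := by
      filter_upwards [isOpen_Ioo.mem_nhds hy'] with z hz
      exact Set.indicator_of_mem (Set.Ioo_subset_Icc_self hz) _
    have hc : ContinuousAt (fun t : ℝ => Complex.exp ((2 * π * c * t : ℝ) * Complex.I)) y := by
      fun_prop
    exact hc.congr hev.symm
  · have hev : uFn fc c =ᶠ[nhds y] fun _ => 0 := by
      filter_upwards [isClosed_Icc.isOpen_compl.mem_nhds hy] with z hz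
      exact Set.indicator_of_notMem hz _
    exact continuousAt_const.congr hev.symm

lemma sinc_prod_integrable (hfc : 0 < fc) (a b : ℝ) :
    Integrable (fun ξ : ℝ => sincF fc (ξ - a) * sincF fc (ξ - b)) := by
  have hsm : AEStronglyMeasurable (fun ξ : ℝ => sincF fc (ξ - a) * sincF fc (ξ - b)) volume :=
    (((measurable_sincF fc).comp (measurable_id.sub measurable_const)).mul
      ((measurable_sincF fc).comp (measurable_id.sub measurable_const))).aestronglyMeasurable
  set m : ℝ := (a + b)/2 with hm
  set r : ℝ := |a - b|/2 + 1 with hrdef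
  have hr : 1 ≤ r := by rw [hrdef]; linarith [abs_nonneg (a - b)]
  set C : ℝ := fc^2 * (1 + (2*r)^2) + 8 with hC
  have hC8 : (8:ℝ) ≤ C := by nlinarith [sq_nonneg fc, sq_nonneg (2*r)]
  have hmaj : Integrable (fun ξ : ℝ => C * (1 + (ξ - m)^2)⁻¹) :=
    (integrable_inv_one_add_sq.comp_sub_right m).const_mul C
  refine hmaj.mono' hsm ?_
  filter_upwards with ξ
  rw [Real.norm_eq_abs, abs_mul]
  have hden : (0:ℝ) < 1 + (ξ - m)^2 := by positivity
  have hma : |m - a| ≤ r := by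
    rw [show m - a = -((a - b)/2) by rw [hm]; ring, abs_neg, abs_div, _root_.abs_two, hrdef]
    linarith [abs_nonneg (a - b)]
  have hmb : |m - b| ≤ r := by
    rw [show m - b = (a - b)/2 by rw [hm]; ring, abs_div, _root_.abs_two, hrdef]
    linarith [abs_nonneg (a - b)]
  by_cases hcase : |ξ - m| ≤ 2*r
  · have hsq : (ξ - m)^2 ≤ (2*r)^2 := by
      have := abs_le.mp hcase
      nlinarith
    calc |sincF fc (ξ - a)| * |sincF fc (ξ - b)| ≤ fc * fc :=
          mul_le_mul (abs_sincF_le hfc _) (abs_sincF_le hfc _) (abs_nonneg _) hfc.le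
      _ ≤ C * (1 + (ξ - m)^2)⁻¹ := by
          rw [← div_eq_mul_inv, le_div_iff₀ hden]
          nlinarith
  · push_neg at hcase
    have htri : ∀ u : ℝ, |m - u| ≤ r → |ξ - m|/2 ≤ |ξ - u| := by
      intro u hu
      have : |ξ - m| ≤ |ξ - u| + |m - u| := by
        calc |ξ - m| = |(ξ - u) + (u - m)| := by ring_nf
          _ ≤ |ξ - u| + |u - m| := abs_add_le _ _
          _ = |ξ - u| + |m - u| := by rw [abs_sub_comm u m]
      linarith
    have h1 := htri a hma
    have h2 := htri b hmb
    have hya : (0:ℝ) < |ξ - a| := by linarith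
    have hyb : (0:ℝ) < |ξ - b| := by linarith
    have hxa : ξ - a ≠ 0 := by intro h; rw [h] at hya; simp at hya
    have hxb : ξ - b ≠ 0 := by intro h; rw [h] at hyb; simp at hyb
    have hprod : |ξ - m|/2 * (|ξ - m|/2) ≤ |ξ - a| * |ξ - b| :=
      mul_le_mul h1 h2 (by positivity) (abs_nonneg _)
    have hy2 : (2:ℝ) ≤ |ξ - m| := by linarith
    have hpi : (3:ℝ) < π := Real.pi_gt_three
    calc |sincF fc (ξ - a)| * |sincF fc (ξ - b)|
        ≤ (π * |ξ - a|)⁻¹ * (π * |ξ - b|)⁻¹ :=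
          mul_le_mul (abs_sincF_le' _ hxa) (abs_sincF_le' _ hxb) (abs_nonneg _)
            (by positivity)
      _ ≤ C * (1 + (ξ - m)^2)⁻¹ := by
          rw [← mul_inv, ← div_eq_mul_inv, inv_eq_one_div,
            div_le_div_iff₀ (by positivity) hden]
          have hsq : (ξ - m)^2 = |ξ - m| * |ξ - m| := by
            rw [← abs_mul, _root_.abs_of_nonneg (by nlinarith [sq_nonneg (ξ - m)] : (0:ℝ) ≤ (ξ-m)*(ξ-m))]
            ring
          have hpp : (9:ℝ) ≤ π * π := by nlinarith [hpi]
          have hX9 : 9 * (|ξ - a| * |ξ - b|) ≤ π * |ξ - a| * (π * |ξ - b|) := by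
            linarith [mul_le_mul_of_nonneg_right hpp
              (mul_nonneg (abs_nonneg (ξ - a)) (abs_nonneg (ξ - b)))]
          have hXpos : (0:ℝ) ≤ π * |ξ - a| * (π * |ξ - b|) := by positivity
          have hCX : 8 * (π * |ξ - a| * (π * |ξ - b|)) ≤ C * (π * |ξ - a| * (π * |ξ - b|)) :=
            mul_le_mul_of_nonneg_right hC8 hXpos
          have hy4 : (4:ℝ) ≤ |ξ - m| * |ξ - m| := by nlinarith [hy2]
          linarith [hprod, hy4, hsq, hX9, hCX]

lemma main (hfc : 0 < fc) (a b : ℝ) :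
    (∫ x : ℝ, sincF fc (x - a) * sincF fc (x - b)) = sincF fc (a - b) := by
  set L : ℂ →L[ℂ] ℂ →L[ℂ] ℂ := ContinuousLinearMap.mul ℂ ℂ with hL
  set w : ℝ → ℂ := uFn fc a ⋆[L] uFn fc b with hw
  have hwint : Integrable w := (uFn_integrable fc a).integrable_convolution L (uFn_integrable fc b)
  -- Fourier transform of w
  have hFw : ∀ ξ : ℝ, 𝓕 w ξ = ((sincF fc (ξ - a) * sincF fc (ξ - b) : ℝ) : ℂ) := by
    intro ξ
    rw [Real.fourier_real_eq_integral_exp_smul]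
    have hpt : ∀ x : ℝ, Complex.exp ((-2 * π * x * ξ : ℝ) * Complex.I) • w x
        = (uFn fc (a - ξ) ⋆[L] uFn fc (b - ξ)) x := by
      intro x
      rw [smul_eq_mul, hw, convolution_def, convolution_def, ← MeasureTheory.integral_const_mul]
      congr 1
      funext t
      simp only [hL, ContinuousLinearMap.mul_apply']
      rw [← char_mul_uFn fc a ξ t, ← char_mul_uFn fc b ξ (x - t)]
      rw [mul_mul_mul_comm, ← Complex.exp_add]
      congr 2
      push_cast
      ring
    simp_rw [hpt]
    rw [integral_convolution L (uFn_integrable fc (a - ξ)) (uFn_integrable fc (b - ξ))]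
    rw [integral_uFn hfc, integral_uFn hfc]
    simp only [hL, ContinuousLinearMap.mul_apply']
    rw [show a - ξ = -(ξ - a) by ring, show b - ξ = -(ξ - b) by ring, sincF_even, sincF_even]
    push_cast
    ring
  -- integrability of the Fourier transform
  have hFint : Integrable (𝓕 w) := by
    have : (𝓕 w) = fun ξ => ((sincF fc (ξ - a) * sincF fc (ξ - b) : ℝ) : ℂ) := funext hFw
    rw [this]
    exact (sinc_prod_integrable hfc a b).ofReal
  -- value at 0
  have hw0 : w 0 = (sincF fc (a - b) : ℂ) := by
    rw [hw, convolution_def]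
    have hpt : ∀ t : ℝ, L (uFn fc a t) (uFn fc b (0 - t)) = uFn fc (a - b) t := by
      intro t
      simp only [hL, ContinuousLinearMap.mul_apply']
      unfold uFn
      by_cases h : t ∈ Set.Icc (-(fc/2)) (fc/2)
      · have h' : 0 - t ∈ Set.Icc (-(fc/2)) (fc/2) := by
          simp only [Set.mem_Icc] at h ⊢
          constructor <;> linarith [h.1, h.2]
        rw [Set.indicator_of_mem h, Set.indicator_of_mem h', Set.indicator_of_mem h,
          ← Complex.exp_add]
        congr 1; push_cast; ring
      · have h' : 0 - t ∉ Set.Icc (-(fc/2)) (fc/2) := by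
          simp only [Set.mem_Icc] at h ⊢
          intro hc
          exact h ⟨by linarith [hc.2], by linarith [hc.1]⟩
        rw [Set.indicator_of_notMem h, Set.indicator_of_notMem h', zero_mul,
          Set.indicator_of_notMem h]
    simp_rw [hpt]
    exact integral_uFn hfc (a - b)
  -- continuity of w at 0
  have hcont : ContinuousAt w 0 := by
    have hwx : w = fun x => ∫ t, uFn fc a t * uFn fc b (x - t) := by
      funext x
      rw [hw, convolution_def]
      simp only [hL, ContinuousLinearMap.mul_apply']
    rw [ContinuousAt, hwx]
    apply MeasureTheory.tendsto_integral_filter_of_dominated_convergence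
      (bound := Set.indicator (Set.Icc (-(fc/2)) (fc/2)) (fun _ => (1:ℝ)))
    · filter_upwards with x
      exact ((measurable_uFn fc a).mul
        ((measurable_uFn fc b).comp (measurable_const.sub measurable_id))).aestronglyMeasurable
    · filter_upwards with x
      filter_upwards with t
      rw [norm_mul]
      calc ‖uFn fc a t‖ * ‖uFn fc b (x - t)‖ ≤ ‖uFn fc a t‖ * 1 :=
            mul_le_mul_of_nonneg_left (norm_uFn_le_one fc b _) (norm_nonneg _)
        _ = ‖uFn fc a t‖ := mul_one _
        _ ≤ _ := norm_uFn_le fc a t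
    · exact (MeasureTheory.integrableOn_const
        measure_Icc_lt_top.ne).integrable_indicator measurableSet_Icc
    · have hae : ∀ᵐ t : ℝ, t ∉ ({-(fc/2), fc/2} : Set ℝ) := by
        refine measure_eq_zero_iff_ae_notMem.mp ?_
        exact Set.Finite.measure_zero (Set.toFinite _) volume
      filter_upwards [hae] with t ht
      simp only [Set.mem_insert_iff, Set.mem_singleton_iff, not_or] at ht
      refine Filter.Tendsto.mul tendsto_const_nhds ?_
      have hc : ContinuousAt (uFn fc b) (0 - t) := by
        apply uFn_continuousAt
        · intro h; apply ht.2; rw [zero_sub] at h; linarith [neg_eq_iff_eq_neg.mp h]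
        · intro h; apply ht.1; rw [zero_sub] at h; linarith [neg_eq_iff_eq_neg.mp h]
      have hsub : ContinuousAt (fun x : ℝ => x - t) 0 :=
        (continuous_id.sub continuous_const).continuousAt
      exact Filter.Tendsto.comp hc hsub
  -- Fourier inversion
  have hinv := MeasureTheory.Integrable.fourierInv_fourier_eq hwint hFint hcont
  rw [Real.fourierInv_eq'] at hinv
  simp only [inner_zero_right, mul_zero, Complex.ofReal_zero, zero_mul, Complex.exp_zero,
    one_smul] at hinv
  rw [hw0] at hinv
  have : (fun ξ : ℝ => 𝓕 w ξ) = fun ξ => ((sincF fc (ξ - a) * sincF fc (ξ - b) : ℝ) : ℂ) :=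
    funext hFw
  rw [this] at hinv
  have hcast : (∫ ξ : ℝ, ((sincF fc (ξ - a) * sincF fc (ξ - b) : ℝ) : ℂ))
      = ((∫ ξ : ℝ, sincF fc (ξ - a) * sincF fc (ξ - b) : ℝ) : ℂ) := _root_.integral_ofReal
  rw [hcast] at hinv
  exact Complex.ofReal_inj.mp hinv

end SincAux

/-- Reproducing (autocorrelation) identity for the sinc kernel:
`∫ sinc_{fc}(x − a) sinc_{fc}(x − b) dx = sinc_{fc}(a − b)`; in particular
`∫ sinc_{fc}(x)² dx = fc`. -/
theorem sinc_reproducing_identity (fc : ℝ) (hfc : 0 < fc) :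
    (∀ a b : ℝ, ∫ x : ℝ, sincF fc (x - a) * sincF fc (x - b) = sincF fc (a - b)) ∧
    (∫ x : ℝ, (sincF fc x) ^ 2) = fc := by
  refine ⟨fun a b => SincAux.main hfc a b, ?_⟩
  have h := SincAux.main hfc 0 0
  simp only [sub_zero] at h
  calc (∫ x : ℝ, (sincF fc x) ^ 2) = ∫ x : ℝ, sincF fc x * sincF fc x := by
        congr 1; funext x; ring
    _ = fc := by rw [h]; simp [sincF]
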